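/- With weight function w = [1,1,0,0] on adjacent transpositions of S₅ (weighted Kendall distance), and the 11 votes given by the columns of the matrix [[1,1,1,2,2,3,3,4,4,5,5],[2,2,2,3,3,2,2,2,2,2,2],[3,3,3,4,4,4,4,5,5,3,3],[4,4,4,5,5,5,5,3,3,4,4],[5,5,5,1,1,1,1,1,1,1,1]], the permutation [2,3,4,5,1] achieves cumulative weighted Kendall distance 16 from the votes (average 16/11 ≈ 1.455), and no permutation achieves a smaller cumulative distance. -/

import Mathlib

/-- The weighted Kendall distance: minimum total weight of a sequence of adjacent
transpositions transforming `σ` into `π`, where the adjacent transposition of positions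
`i` and `i+1` (zero-indexed) has weight `w i`. -/
noncomputable def wk {n : ℕ} (w : ℕ → ℝ) (π σ : Equiv.Perm (Fin n)) : ℝ :=
  sInf {c | ∃ L : List (Fin n), (∀ i ∈ L, (i : ℕ) + 1 < n) ∧
    σ * (L.map fun i => Equiv.swap i ⟨((i : ℕ) + 1) % n, Nat.mod_lt _ i.pos⟩).prod = π ∧
    c = (L.map fun i => w (i : ℕ)).sum}

/-- Build a permutation of `Fin 5` from its one-line notation (zero-indexed). -/
noncomputable def mkPerm (v : Fin 5 → Fin 5) (h : Function.Bijective v) : Equiv.Perm (Fin 5) :=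
  Equiv.ofBijective v h

/-- Vote `[1,2,3,4,5]` (columns 1–3). -/
noncomputable def v1 : Equiv.Perm (Fin 5) := mkPerm ![0, 1, 2, 3, 4] (by decide)
/-- Vote `[2,3,4,5,1]` (columns 4–5). -/
noncomputable def v2 : Equiv.Perm (Fin 5) := mkPerm ![1, 2, 3, 4, 0] (by decide)
/-- Vote `[3,2,4,5,1]` (columns 6–7). -/
noncomputable def v3 : Equiv.Perm (Fin 5) := mkPerm ![2, 1, 3, 4, 0] (by decide)
/-- Vote `[4,2,5,3,1]` (columns 8–9). -/
noncomputable def v4 : Equiv.Perm (Fin 5) := mkPerm ![3, 1, 4, 2, 0] (by decide)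
/-- Vote `[5,2,3,4,1]` (columns 10–11). -/
noncomputable def v5 : Equiv.Perm (Fin 5) := mkPerm ![4, 1, 2, 3, 0] (by decide)

/-- The 11 votes (columns of the matrix). -/
noncomputable def votes : Fin 11 → Equiv.Perm (Fin 5) :=
  ![v1, v1, v1, v2, v2, v3, v3, v4, v4, v5, v5]

/-- The weights `w = [1,1,0,0]` on adjacent transpositions (zero-indexed). -/
noncomputable def w2 : ℕ → ℝ := fun l => if l ≤ 1 then 1 else 0

/- ## Auxiliary machinery -/

/-- The adjacent swap generators as they appear in `wk` for `n = 5`. -/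
abbrev sw (i : Fin 5) : Equiv.Perm (Fin 5) :=
  Equiv.swap i ⟨((i : ℕ) + 1) % 5, Nat.mod_lt _ i.pos⟩

/-- Natural-number weights: `wn l = 1` for `l ≤ 1`, else `0`. -/
def wn : ℕ → ℕ := fun l => if l ≤ 1 then 1 else 0

lemma w2_eq (l : ℕ) : w2 l = (wn l : ℝ) := by
  unfold w2 wn; split <;> simp

/-- Potential function: the exact weighted distance from the identity of any permutation `g`,
depending only on `g 0` and `g 1`. -/
def Fn : Fin 5 → Fin 5 → ℕ := fun a b =>
  if a = 0 ∧ b = 1 then 0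
  else if a = 0 ∨ (a = 1 ∧ b = 0) then 1
  else if a = 1 ∨ b = 0 then 2
  else 3

lemma Fn_swap : ∀ a b : Fin 5, a ≠ b → Fn b a ≤ Fn a b + 1 := by decide

lemma Fn_repl : ∀ a b c : Fin 5, a ≠ b → a ≠ c → b ≠ c → Fn a c ≤ Fn a b + 1 := by decide

/-- One-step decrease bound for the potential along a generator. -/
lemma Fn_step (g : Equiv.Perm (Fin 5)) (t : Fin 5) (ht : (t : ℕ) + 1 < 5) :
    Fn ((g * sw t) 0) ((g * sw t) 1) ≤ Fn (g 0) (g 1) + wn t := by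
  have h01 : g 0 ≠ g 1 := fun h => by simpa using g.injective h
  have h02 : g 0 ≠ g 2 := fun h => by simpa using g.injective h
  have h12 : g 1 ≠ g 2 := fun h => by simpa using g.injective h
  fin_cases t
  · -- t = 0 : swaps positions 0,1
    show Fn ((g * sw 0) 0) ((g * sw 0) 1) ≤ Fn (g 0) (g 1) + wn 0
    have e0 : (g * sw 0) 0 = g 1 := rfl
    have e1 : (g * sw 0) 1 = g 0 := rfl
    rw [e0, e1]
    simpa [wn] using Fn_swap (g 0) (g 1) h01
  · -- t = 1 : swaps positions 1,2
    show Fn ((g * sw 1) 0) ((g * sw 1) 1) ≤ Fn (g 0) (g 1) + wn 1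
    have e0 : (g * sw 1) 0 = g 0 := rfl
    have e1 : (g * sw 1) 1 = g 2 := rfl
    rw [e0, e1]
    simpa [wn] using Fn_repl (g 0) (g 1) (g 2) h01 h02 h12
  · -- t = 2 : free
    show Fn ((g * sw 2) 0) ((g * sw 2) 1) ≤ Fn (g 0) (g 1) + wn 2
    have e0 : (g * sw 2) 0 = g 0 := rfl
    have e1 : (g * sw 2) 1 = g 1 := rfl
    rw [e0, e1]; simp [wn]
  · -- t = 3 : free
    show Fn ((g * sw 3) 0) ((g * sw 3) 1) ≤ Fn (g 0) (g 1) + wn 3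
    have e0 : (g * sw 3) 0 = g 0 := rfl
    have e1 : (g * sw 3) 1 = g 1 := rfl
    rw [e0, e1]; simp [wn]
  · exact absurd ht (by decide)

/-- The weighted cost of any word is at least the potential of its product. -/
lemma cost_lower (L : List (Fin 5)) (h : ∀ i ∈ L, (i : ℕ) + 1 < 5) :
    ((Fn ((L.map sw).prod 0) ((L.map sw).prod 1) : ℕ) : ℝ) ≤
      (L.map fun i => w2 (i : ℕ)).sum := by
  induction L using List.reverseRecOn with
  | nil => simp [Fn]
  | append_singleton M t ih =>
    have hM : ∀ i ∈ M, (i : ℕ) + 1 < 5 := fun i hi => h i (by simp [hi])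
    have ht : (t : ℕ) + 1 < 5 := h t (by simp)
    have key := Fn_step (M.map sw).prod t ht
    have : ((Fn (((M ++ [t]).map sw).prod 0) (((M ++ [t]).map sw).prod 1) : ℕ) : ℝ) ≤
        ((Fn ((M.map sw).prod 0) ((M.map sw).prod 1) + wn t : ℕ) : ℝ) := by
      exact_mod_cast by simpa [List.map_append] using key
    calc ((Fn (((M ++ [t]).map sw).prod 0) (((M ++ [t]).map sw).prod 1) : ℕ) : ℝ)
        ≤ ((Fn ((M.map sw).prod 0) ((M.map sw).prod 1) : ℕ) : ℝ) + ((wn t : ℕ) : ℝ) := by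
          push_cast at this ⊢; linarith
      _ ≤ (M.map fun i => w2 (i : ℕ)).sum + w2 (t : ℕ) := by
          rw [w2_eq]; exact add_le_add_left (ih hM) _
      _ = ((M ++ [t]).map fun i => w2 (i : ℕ)).sum := by simp

/-- Every transposition is a word in the adjacent generators. -/
lemma swap_word : ∀ x y : Fin 5, x ≠ y →
    ∃ L : List (Fin 5), (∀ i ∈ L, (i : ℕ) + 1 < 5) ∧ (L.map sw).prod = Equiv.swap x y := by
  have W : ∀ (L : List (Fin 5)) (x y : Fin 5), (∀ i ∈ L, (i : ℕ) + 1 < 5) →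
      (L.map sw).prod = Equiv.swap x y →
      ∃ L : List (Fin 5), (∀ i ∈ L, (i : ℕ) + 1 < 5) ∧ (L.map sw).prod = Equiv.swap x y :=
    fun L x y h1 h2 => ⟨L, h1, h2⟩
  intro x y hxy
  fin_cases x <;> fin_cases y <;> first
    | exact absurd rfl hxy
    | exact W [0] _ _ (by decide) (by decide)
    | exact W [1] _ _ (by decide) (by decide)
    | exact W [2] _ _ (by decide) (by decide)
    | exact W [3] _ _ (by decide) (by decide)
    | exact W [0, 1, 0] _ _ (by decide) (by decide)
    | exact W [2, 1, 2] _ _ (by decide) (by decide)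
    | exact W [2, 3, 2] _ _ (by decide) (by decide)
    | exact W [2, 0, 1, 2, 0] _ _ (by decide) (by decide)
    | exact W [3, 2, 1, 2, 3] _ _ (by decide) (by decide)
    | exact W [3, 2, 0, 1, 2, 3, 0] _ _ (by decide) (by decide)

/-- Every permutation of `Fin 5` is a word in the adjacent generators. -/
lemma exists_word (g : Equiv.Perm (Fin 5)) :
    ∃ L : List (Fin 5), (∀ i ∈ L, (i : ℕ) + 1 < 5) ∧ (L.map sw).prod = g := by
  refine Equiv.Perm.swap_induction_on g ⟨[], by simp, by simp⟩ ?_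
  rintro f y z hyz ⟨L, hL1, hL2⟩
  obtain ⟨M, hM1, hM2⟩ := swap_word y z hyz
  refine ⟨M ++ L, fun i hi => ?_, by simp [hL2, hM2]⟩
  rcases List.mem_append.1 hi with h | h
  exacts [hM1 i h, hL1 i h]

/-- The defining set of `wk` for `n = 5` is nonempty. -/
lemma wk_set_nonempty (π σ : Equiv.Perm (Fin 5)) :
    Set.Nonempty {c | ∃ L : List (Fin 5), (∀ i ∈ L, (i : ℕ) + 1 < 5) ∧
      σ * (L.map fun i => Equiv.swap i ⟨((i : ℕ) + 1) % 5, Nat.mod_lt _ i.pos⟩).prod = π ∧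
      c = (L.map fun i => w2 (i : ℕ)).sum} := by
  obtain ⟨L, h1, h2⟩ := exists_word (σ⁻¹ * π)
  exact ⟨_, L, h1, by rw [h2]; group, rfl⟩

lemma wk_set_bddBelow (π σ : Equiv.Perm (Fin 5)) :
    BddBelow {c | ∃ L : List (Fin 5), (∀ i ∈ L, (i : ℕ) + 1 < 5) ∧
      σ * (L.map fun i => Equiv.swap i ⟨((i : ℕ) + 1) % 5, Nat.mod_lt _ i.pos⟩).prod = π ∧
      c = (L.map fun i => w2 (i : ℕ)).sum} := by
  refine ⟨0, fun c hc => ?_⟩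
  obtain ⟨L, -, -, rfl⟩ := hc
  apply List.sum_nonneg
  intro x hx
  obtain ⟨i, -, rfl⟩ := List.mem_map.1 hx
  rw [w2_eq]; positivity

/-- Lower bound for `wk` via the potential. -/
lemma wk_lower (π σ : Equiv.Perm (Fin 5)) :
    ((Fn ((σ⁻¹ * π) 0) ((σ⁻¹ * π) 1) : ℕ) : ℝ) ≤ wk w2 π σ := by
  apply le_csInf (wk_set_nonempty π σ)
  rintro c ⟨L, h1, h2, rfl⟩
  have hp : (L.map sw).prod = σ⁻¹ * π := by
    rw [← h2]; group
  have := cost_lower L h1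
  rwa [hp] at this

/-- Upper bound for `wk` from an explicit word. -/
lemma wk_upper (π σ : Equiv.Perm (Fin 5)) (L : List (Fin 5))
    (h1 : ∀ i ∈ L, (i : ℕ) + 1 < 5) (h2 : σ * (L.map sw).prod = π) :
    wk w2 π σ ≤ (L.map fun i => w2 (i : ℕ)).sum :=
  csInf_le (wk_set_bddBelow π σ) ⟨L, h1, h2, rfl⟩

/- ## Exact values at `v2` -/

lemma fin_coes : ((0 : Fin 5) : ℕ) = 0 ∧ ((1 : Fin 5) : ℕ) = 1 ∧ ((2 : Fin 5) : ℕ) = 2 ∧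
    ((3 : Fin 5) : ℕ) = 3 := by decide

lemma wk_exact (σ : Equiv.Perm (Fin 5)) (σi : Equiv.Perm (Fin 5)) (hσ : σ * σi = 1)
    (L : List (Fin 5)) (h1 : ∀ i ∈ L, (i : ℕ) + 1 < 5) (h2 : σ * (L.map sw).prod = v2)
    (d : ℕ) (hF : Fn ((σi * v2) 0) ((σi * v2) 1) = d)
    (hsum : (L.map fun i => w2 (i : ℕ)).sum = (d : ℝ)) :
    wk w2 v2 σ = d := by
  have hub := wk_upper v2 σ L h1 h2
  have hlb := wk_lower v2 σ
  rw [inv_eq_of_mul_eq_one_right hσ, hF] at hlb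
  rw [hsum] at hub
  linarith

lemma wk_v1 : wk w2 v2 v1 = 2 := by
  exact_mod_cast wk_exact v1 v1 (by decide) [(0 : Fin 5), 1, 2, 3] (by decide) (by decide) 2
    (by decide) (by norm_num [w2, fin_coes.1, fin_coes.2.1, fin_coes.2.2.1, fin_coes.2.2.2])

lemma wk_v2' : wk w2 v2 v2 = 0 := by
  have := wk_exact v2 (mkPerm ![4, 0, 1, 2, 3] (by decide)) (by decide) [] (by decide)
    (by simp) 0 (by decide) (by simp)
  simpa using this

lemma wk_v3 : wk w2 v2 v3 = 1 := by
  exact_mod_cast wk_exact v3 (mkPerm ![4, 1, 0, 2, 3] (by decide)) (by decide) [(0 : Fin 5)]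
    (by decide) (by decide) 1 (by decide) (by norm_num [w2, fin_coes.1])

lemma wk_v4 : wk w2 v2 v4 = 2 := by
  exact_mod_cast wk_exact v4 (mkPerm ![4, 1, 3, 0, 2] (by decide)) (by decide)
    [(2 : Fin 5), 0, 1] (by decide) (by decide) 2 (by decide)
    (by norm_num [w2, fin_coes.1, fin_coes.2.1, fin_coes.2.2.1])

lemma wk_v5 : wk w2 v2 v5 = 2 := by
  exact_mod_cast wk_exact v5 (mkPerm ![4, 1, 2, 3, 0] (by decide)) (by decide)
    [(0 : Fin 5), 1, 2] (by decide) (by decide) 2 (by decide)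
    (by norm_num [w2, fin_coes.1, fin_coes.2.1, fin_coes.2.2.1])

/- ## Lower bound for arbitrary `π` -/

/-- The total potential as a function of the first two values of `π`. -/
def Tot (a b : Fin 5) : ℕ :=
  3 * Fn (![0, 1, 2, 3, 4] a) (![0, 1, 2, 3, 4] b) +
  2 * Fn (![4, 0, 1, 2, 3] a) (![4, 0, 1, 2, 3] b) +
  2 * Fn (![4, 1, 0, 2, 3] a) (![4, 1, 0, 2, 3] b) +
  2 * Fn (![4, 1, 3, 0, 2] a) (![4, 1, 3, 0, 2] b) +
  2 * Fn (![4, 1, 2, 3, 0] a) (![4, 1, 2, 3, 0] b)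

lemma Tot_ge : ∀ a b : Fin 5, a ≠ b → 16 ≤ Tot a b := by decide

/-- with weights `[1,1,0,0]`, the ranking `[2,3,4,5,1]` achieves cumulative
weighted Kendall distance `16` from the 11 votes, and no permutation does better. -/
theorem stmt_17 :
    (∑ i : Fin 11, wk w2 v2 (votes i) = 16) ∧
    (∀ π : Equiv.Perm (Fin 5), 16 ≤ ∑ i : Fin 11, wk w2 π (votes i)) := by
  constructor
  · simp only [Fin.sum_univ_succ, Finset.univ_unique, Fin.default_eq_zero,
      Finset.sum_singleton, votes]
    simp only [Matrix.cons_val_zero, Matrix.cons_val_succ]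
    rw [wk_v1, wk_v2', wk_v3, wk_v4, wk_v5]
    norm_num
  · intro π
    -- bound each summand by a potential
    have i1 : v1⁻¹ = mkPerm ![0, 1, 2, 3, 4] (by decide) :=
      inv_eq_of_mul_eq_one_right (by decide)
    have i2 : v2⁻¹ = mkPerm ![4, 0, 1, 2, 3] (by decide) :=
      inv_eq_of_mul_eq_one_right (by decide)
    have i3 : v3⁻¹ = mkPerm ![4, 1, 0, 2, 3] (by decide) :=
      inv_eq_of_mul_eq_one_right (by decide)
    have i4 : v4⁻¹ = mkPerm ![4, 1, 3, 0, 2] (by decide) :=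
      inv_eq_of_mul_eq_one_right (by decide)
    have i5 : v5⁻¹ = mkPerm ![4, 1, 2, 3, 0] (by decide) :=
      inv_eq_of_mul_eq_one_right (by decide)
    have b1 := wk_lower π v1
    have b2 := wk_lower π v2
    have b3 := wk_lower π v3
    have b4 := wk_lower π v4
    have b5 := wk_lower π v5
    rw [i1] at b1; rw [i2] at b2; rw [i3] at b3; rw [i4] at b4; rw [i5] at b5
    have happ : ∀ (v : Fin 5 → Fin 5) (h : Function.Bijective v) (x : Fin 5),
        (mkPerm v h * π) x = v (π x) := fun v h x => rfl
    simp only [happ] at b1 b2 b3 b4 b5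
    have key : (16 : ℕ) ≤ Tot (π 0) (π 1) :=
      Tot_ge (π 0) (π 1) (fun h => by simpa using π.injective h)
    have keyR : (16 : ℝ) ≤ (Tot (π 0) (π 1) : ℕ) := by exact_mod_cast key
    have expand : ((Tot (π 0) (π 1) : ℕ) : ℝ) =
        3 * (Fn (![0, 1, 2, 3, 4] (π 0)) (![0, 1, 2, 3, 4] (π 1)) : ℕ) +
        2 * (Fn (![4, 0, 1, 2, 3] (π 0)) (![4, 0, 1, 2, 3] (π 1)) : ℕ) +
        2 * (Fn (![4, 1, 0, 2, 3] (π 0)) (![4, 1, 0, 2, 3] (π 1)) : ℕ) +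
        2 * (Fn (![4, 1, 3, 0, 2] (π 0)) (![4, 1, 3, 0, 2] (π 1)) : ℕ) +
        2 * (Fn (![4, 1, 2, 3, 0] (π 0)) (![4, 1, 2, 3, 0] (π 1)) : ℕ) := by
      unfold Tot; push_cast; ring
    rw [expand] at keyR
    have hsum : ∑ i : Fin 11, wk w2 π (votes i) =
        3 * wk w2 π v1 + 2 * wk w2 π v2 + 2 * wk w2 π v3 + 2 * wk w2 π v4 + 2 * wk w2 π v5 := by
      simp only [Fin.sum_univ_succ, Finset.univ_unique, Fin.default_eq_zero,
        Finset.sum_singleton, votes]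
      simp only [Matrix.cons_val_zero, Matrix.cons_val_succ]
      ring
    rw [hsum]
    linarith
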